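/- Every simply colored coalgebra (C, G, δ) over a field k is pointed: the coradical C₀ of C is contained in C[G] = span_k(G), so every cosimple subcoalgebra of C is one-dimensional. -/

import Mathlib

open TensorProduct

universe u
variable (k : Type u) [Field k] (C : Type u) [AddCommGroup C] [Module k C]

/-- Iterated tensor powers `C^{⊗(n+1)}` as bundled modules. -/
noncomputable def TP : ℕ → ModuleCat.{u} k
  | 0 => ModuleCat.of k C
  | n + 1 => ModuleCat.of k (C ⊗[k] (TP n))

/-- The `n`-th iterate of a comultiplication-like map `Δb : C → C ⊗ C`. -/
noncomputable def iterComul (Δb : C →ₗ[k] C ⊗[k] C) : (n : ℕ) → (C →ₗ[k] TP k C n)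
  | 0 => LinearMap.id
  | n + 1 => (LinearMap.lTensor C (iterComul Δb n)) ∘ₗ Δb

/-- A group-like (set-like) element of a coalgebra. -/
def IsGroupLike [Coalgebra k C] (g : C) : Prop :=
  Coalgebra.comul (R := k) g = g ⊗ₜ[k] g ∧ Coalgebra.counit (R := k) g = 1

/-- A subspace `S` of a coalgebra is a subcoalgebra if `Δ(S) ⊆ S ⊗ S`. -/
def IsSubcoalgebra [Coalgebra k C] (S : Submodule k C) : Prop :=
  Submodule.map (Coalgebra.comul (R := k) (A := C)) S ≤
    Submodule.map₂ (TensorProduct.mk k C C) S S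

/-- A cosimple subcoalgebra: nonzero, with no proper nonzero subcoalgebras. -/
def IsCosimple [Coalgebra k C] (S : Submodule k C) : Prop :=
  IsSubcoalgebra k C S ∧ S ≠ ⊥ ∧
    ∀ T : Submodule k C, IsSubcoalgebra k C T → T ≤ S → T = ⊥ ∨ T = S

/-- The coradical of a coalgebra: the sum of all its cosimple subcoalgebras. -/
noncomputable def coradical [Coalgebra k C] : Submodule k C :=
  sSup {S : Submodule k C | IsCosimple k C S}

section Aux

open LinearMap

variable {K : Type u} [Field K]
variable {M N P Q : Type u}
  [AddCommGroup M] [Module K M] [AddCommGroup N] [Module K N]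
  [AddCommGroup P] [Module K P] [AddCommGroup Q] [Module K Q]

lemma aux_bot_subtype : ((⊥ : Submodule K M).subtype) = 0 := by
  ext x
  exact x.2

lemma aux_ker_map (f : M →ₗ[K] N) (g : P →ₗ[K] Q) :
    ker (TensorProduct.map f g) =
      range ((ker g).subtype.lTensor M) ⊔ range ((ker f).subtype.rTensor P) := by
  have hfact : TensorProduct.map f g =
      (TensorProduct.map (LinearMap.range f).subtype (LinearMap.range g).subtype) ∘ₗ
        TensorProduct.map f.rangeRestrict g.rangeRestrict := by
    rw [← TensorProduct.map_comp]
    congr 1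
  have hinj : Function.Injective
      (TensorProduct.map (LinearMap.range f).subtype (LinearMap.range g).subtype) := by
    rw [← lTensor_comp_rTensor, LinearMap.coe_comp]
    exact (Module.Flat.lTensor_preserves_injective_linearMap _
        (Submodule.injective_subtype _)).comp
      (Module.Flat.rTensor_preserves_injective_linearMap _ (Submodule.injective_subtype _))
  have hfg : Function.Exact ((ker f).subtype) f.rangeRestrict := by
    rw [LinearMap.exact_iff, ker_rangeRestrict, Submodule.range_subtype]
  have hfg' : Function.Exact ((ker g).subtype) g.rangeRestrict := by
    rw [LinearMap.exact_iff, ker_rangeRestrict, Submodule.range_subtype]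
  rw [hfact, ker_comp, ker_eq_bot.mpr hinj, Submodule.comap_bot,
    TensorProduct.map_ker hfg f.surjective_rangeRestrict hfg' g.surjective_rangeRestrict]

lemma aux_ker_lTensor (M : Type u) [AddCommGroup M] [Module K M] (h : P →ₗ[K] N) :
    ker (h.lTensor M) = range ((ker h).subtype.lTensor M) := by
  have h1 : h.lTensor M = TensorProduct.map (LinearMap.id : M →ₗ[K] M) h := rfl
  rw [h1, aux_ker_map, ker_id, aux_bot_subtype, rTensor_zero, range_zero, sup_bot_eq]

lemma aux_range_map_le (f : M →ₗ[K] N) (g : P →ₗ[K] Q) :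
    range (TensorProduct.map f g) ≤
      Submodule.map₂ (TensorProduct.mk K N Q) (range f) (range g) := by
  rw [TensorProduct.range_map_eq_span_tmul, Submodule.span_le]
  rintro _ ⟨m, n, rfl⟩
  exact Submodule.apply_mem_map₂ _ (mem_range_self f m) (mem_range_self g n)

lemma aux_TT_eq_range (P' Q' : Submodule K M) :
    Submodule.map₂ (TensorProduct.mk K M M) P' Q'
      = range (TensorProduct.map P'.subtype Q'.subtype) := by
  refine le_antisymm (Submodule.map₂_le.mpr fun m hm n hn => ⟨⟨m, hm⟩ ⊗ₜ[K] ⟨n, hn⟩, rfl⟩) ?_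
  simpa using aux_range_map_le P'.subtype Q'.subtype

lemma aux_mem_TT {X Y : Type u} [AddCommGroup X] [Module K X] [AddCommGroup Y] [Module K Y]
    (f : M →ₗ[K] X) (g : M →ₗ[K] Y) (P' Q' : Submodule K M) {t : M ⊗[K] M}
    (ht : t ∈ Submodule.map₂ (TensorProduct.mk K M M) P' Q')
    (h0 : TensorProduct.map f g t = 0) :
    t ∈ Submodule.map₂ (TensorProduct.mk K M M) (P' ⊓ ker f) Q'
        ⊔ Submodule.map₂ (TensorProduct.mk K M M) P' (Q' ⊓ ker g) := by
  rw [aux_TT_eq_range] at ht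
  obtain ⟨s, rfl⟩ := ht
  have h1 : TensorProduct.map (f ∘ₗ P'.subtype) (g ∘ₗ Q'.subtype) s = 0 := by
    rw [TensorProduct.map_comp]
    exact h0
  have h2 : s ∈ range ((ker (g ∘ₗ Q'.subtype)).subtype.lTensor P')
      ⊔ range ((ker (f ∘ₗ P'.subtype)).subtype.rTensor Q') := by
    rw [← aux_ker_map]
    exact h1
  obtain ⟨a, ha, b, hb, rfl⟩ := Submodule.mem_sup.mp h2
  rw [map_add]
  refine Submodule.add_mem _ (Submodule.mem_sup_right ?_) (Submodule.mem_sup_left ?_)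
  · obtain ⟨ua, rfl⟩ := ha
    rw [← LinearMap.comp_apply, LinearMap.map_comp_lTensor]
    have hmem := aux_range_map_le P'.subtype (Q'.subtype ∘ₗ (ker (g ∘ₗ Q'.subtype)).subtype)
      ⟨ua, rfl⟩
    have hr : range (Q'.subtype ∘ₗ (ker (g ∘ₗ Q'.subtype)).subtype) = Q' ⊓ ker g := by
      rw [range_comp, Submodule.range_subtype, ker_comp, Submodule.map_comap_subtype]
    rwa [Submodule.range_subtype, hr] at hmem
  · obtain ⟨ub, rfl⟩ := hb
    rw [← LinearMap.comp_apply, LinearMap.map_comp_rTensor]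
    have hmem := aux_range_map_le (P'.subtype ∘ₗ (ker (f ∘ₗ P'.subtype)).subtype) Q'.subtype
      ⟨ub, rfl⟩
    have hr : range (P'.subtype ∘ₗ (ker (f ∘ₗ P'.subtype)).subtype) = P' ⊓ ker f := by
      rw [range_comp, Submodule.range_subtype, ker_comp, Submodule.map_comap_subtype]
    rwa [Submodule.range_subtype, hr] at hmem

end Aux

/-- Every simply colored coalgebra `(C, G, δ)` over a field is pointed: the coradical is
contained in `C[G] = span G`, and every cosimple subcoalgebra is one-dimensional. -/
theorem simplyColored_isPointed [Coalgebra k C]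
    (G : Set C) (hG : ∀ g ∈ G, IsGroupLike k C g) (hGli : LinearIndependent k ((↑) : G → C))
    (δ : C →ₗ[k] C) (hrange : LinearMap.range δ = Submodule.span k G)
    (hfix : ∀ g ∈ G, δ g = g) (hδδ : δ ∘ₗ δ = δ)
    (hδε : (Coalgebra.counit (R := k) (A := C)) ∘ₗ δ = Coalgebra.counit)
    (hδΔ : (Coalgebra.comul (R := k) (A := C)) ∘ₗ δ = (TensorProduct.map δ δ) ∘ₗ Coalgebra.comul)
    (hconil : ∀ x ∈ LinearMap.ker δ, ∃ N : ℕ,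
      iterComul k C
        (Coalgebra.comul
          - (TensorProduct.map δ LinearMap.id) ∘ₗ Coalgebra.comul
          - (TensorProduct.map LinearMap.id δ) ∘ₗ Coalgebra.comul) N x = 0) :
    coradical k C ≤ Submodule.span k G ∧
      ∀ S : Submodule k C, IsCosimple k C S → Module.finrank k S = 1 := by
  classical
  set A := Submodule.span k G with hA
  set Δb : C →ₗ[k] C ⊗[k] C :=
    (Coalgebra.comul
      - (TensorProduct.map δ LinearMap.id) ∘ₗ Coalgebra.comul
      - (TensorProduct.map LinearMap.id δ) ∘ₗ Coalgebra.comul) with hΔb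
  -- comultiplication of elements of A
  have hcomulA : ∀ x ∈ A, Coalgebra.comul (R := k) x
      ∈ Submodule.map₂ (TensorProduct.mk k C C) A A := by
    intro x hx
    induction hx using Submodule.span_induction with
    | mem g hg =>
      rw [(hG g hg).1]
      exact Submodule.apply_mem_map₂ _ (Submodule.subset_span hg) (Submodule.subset_span hg)
    | zero => simpa using Submodule.zero_mem _
    | add y z _ _ hy hz => rw [map_add]; exact Submodule.add_mem _ hy hz
    | smul r y _ hy => rw [map_smul]; exact Submodule.smul_mem _ r hy
  -- elements killed by the (n+1)-st iterate
  have hJsucc : ∀ (n : ℕ) (x : C), x ∈ LinearMap.ker (iterComul k C Δb (n + 1)) →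
      Δb x ∈ Submodule.map₂ (TensorProduct.mk k C C) ⊤
        (LinearMap.ker (iterComul k C Δb n)) := by
    intro n x hx
    have h0 : (LinearMap.lTensor C (iterComul k C Δb n)) (Δb x) = 0 := by
      have := LinearMap.mem_ker.mp hx
      exact this
    have h1 : Δb x ∈ LinearMap.ker ((iterComul k C Δb n).lTensor C) := h0
    rw [aux_ker_lTensor] at h1
    have h2 := aux_range_map_le (LinearMap.id (R := k) (M := C))
      (LinearMap.ker (iterComul k C Δb n)).subtype h1
    rwa [LinearMap.range_id, Submodule.range_subtype] at h2
  -- exhaustion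
  have hexh : ∀ x : C, ∃ n : ℕ, x ∈ A ⊔ LinearMap.ker (iterComul k C Δb n) := by
    intro x
    have hker : x - δ x ∈ LinearMap.ker δ := by
      have h := DFunLike.congr_fun hδδ x
      simp only [LinearMap.comp_apply] at h
      rw [LinearMap.mem_ker, map_sub, h, sub_self]
    obtain ⟨N, hN⟩ := hconil _ hker
    refine ⟨N, Submodule.mem_sup.mpr ⟨δ x, ?_, x - δ x, LinearMap.mem_ker.mpr hN, ?_⟩⟩
    · rw [← hrange]; exact LinearMap.mem_range_self δ x
    · abel
  -- the wedge-type step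
  have hFstep : ∀ (n : ℕ) (x : C), x ∈ A ⊔ LinearMap.ker (iterComul k C Δb (n + 1)) →
      Coalgebra.comul (R := k) x ∈
        Submodule.map₂ (TensorProduct.mk k C C) A ⊤ ⊔
          Submodule.map₂ (TensorProduct.mk k C C) ⊤
            (A ⊔ LinearMap.ker (iterComul k C Δb n)) := by
    intro n x hx
    obtain ⟨a, ha, j, hj, rfl⟩ := Submodule.mem_sup.mp hx
    rw [map_add]
    refine Submodule.add_mem _ (Submodule.mem_sup_left
      (Submodule.map₂_le_map₂_right le_top (hcomulA a ha))) ?_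
    have hdecomp : Coalgebra.comul (R := k) j = Δb j
        + (TensorProduct.map δ LinearMap.id) (Coalgebra.comul (R := k) j)
        + (TensorProduct.map LinearMap.id δ) (Coalgebra.comul (R := k) j) := by
      rw [hΔb]
      simp only [LinearMap.sub_apply, LinearMap.comp_apply]
      abel
    rw [hdecomp]
    refine Submodule.add_mem _ (Submodule.add_mem _ ?_ ?_) ?_
    · exact Submodule.mem_sup_right (Submodule.map₂_le_map₂_right le_sup_right (hJsucc n j hj))
    · refine Submodule.mem_sup_left ?_
      have h2 := aux_range_map_le δ (LinearMap.id (R := k) (M := C))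
        (LinearMap.mem_range_self _ (Coalgebra.comul (R := k) j))
      rwa [LinearMap.range_id, hrange] at h2
    · refine Submodule.mem_sup_right (Submodule.map₂_le_map₂_right le_sup_left ?_)
      have h2 := aux_range_map_le (LinearMap.id (R := k) (M := C)) δ
        (LinearMap.mem_range_self _ (Coalgebra.comul (R := k) j))
      rwa [LinearMap.range_id, hrange] at h2
  -- killing lemma for quotient maps
  have hkill : ∀ P' Q' : Submodule k C,
      Submodule.map₂ (TensorProduct.mk k C C) P' ⊤ ⊔
        Submodule.map₂ (TensorProduct.mk k C C) ⊤ Q' ≤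
          LinearMap.ker (TensorProduct.map P'.mkQ Q'.mkQ) := by
    intro P' Q'
    refine sup_le (Submodule.map₂_le.mpr fun m hm n _ => ?_)
      (Submodule.map₂_le.mpr fun m _ n hn => ?_)
    · rw [LinearMap.mem_ker]
      have : P'.mkQ m = 0 := (Submodule.Quotient.mk_eq_zero P').mpr hm
      simp [TensorProduct.map_tmul, this]
    · rw [LinearMap.mem_ker]
      have : Q'.mkQ n = 0 := (Submodule.Quotient.mk_eq_zero Q').mpr hn
      simp [TensorProduct.map_tmul, this]
  -- every cosimple subcoalgebra is contained in A
  have hcos_le : ∀ S : Submodule k C, IsCosimple k C S → S ≤ A := by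
    intro S hS
    obtain ⟨hsub, hSne, hmin⟩ := hS
    have hSA : IsSubcoalgebra k C (S ⊓ A) := by
      intro t ht
      obtain ⟨x, hx, rfl⟩ := Submodule.mem_map.mp ht
      have hxS : Coalgebra.comul (R := k) x ∈ Submodule.map₂ (TensorProduct.mk k C C) S S :=
        hsub (Submodule.mem_map_of_mem hx.1)
      have hxA := hcomulA x hx.2
      have h1 : TensorProduct.map A.mkQ (LinearMap.id (R := k) (M := C))
          (Coalgebra.comul (R := k) x) = 0 := by
        have hle : Submodule.map₂ (TensorProduct.mk k C C) A A ≤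
            LinearMap.ker (TensorProduct.map A.mkQ (LinearMap.id (R := k) (M := C))) :=
          Submodule.map₂_le.mpr fun m hm n _ => by
            have : A.mkQ m = 0 := (Submodule.Quotient.mk_eq_zero A).mpr hm
            simp [TensorProduct.map_tmul, this]
        exact hle hxA
      have h2 := aux_mem_TT A.mkQ (LinearMap.id (R := k) (M := C)) S S hxS h1
      rw [Submodule.ker_mkQ, LinearMap.ker_id, inf_bot_eq, Submodule.map₂_bot_right,
        sup_bot_eq] at h2
      have h3 : TensorProduct.map (LinearMap.id (R := k) (M := C)) A.mkQ
          (Coalgebra.comul (R := k) x) = 0 := by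
        have hle : Submodule.map₂ (TensorProduct.mk k C C) A A ≤
            LinearMap.ker (TensorProduct.map (LinearMap.id (R := k) (M := C)) A.mkQ) :=
          Submodule.map₂_le.mpr fun m _ n hn => by
            have : A.mkQ n = 0 := (Submodule.Quotient.mk_eq_zero A).mpr hn
            simp [TensorProduct.map_tmul, this]
        exact hle hxA
      have h4 := aux_mem_TT (LinearMap.id (R := k) (M := C)) A.mkQ (S ⊓ A) S h2 h3
      rw [Submodule.ker_mkQ, LinearMap.ker_id, inf_bot_eq, Submodule.map₂_bot_left,
        bot_sup_eq] at h4
      exact h4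
    rcases hmin (S ⊓ A) hSA inf_le_left with h0 | hS'
    · exfalso
      have hFn : ∀ n : ℕ, S ⊓ (A ⊔ LinearMap.ker (iterComul k C Δb n)) = ⊥ := by
        intro n
        induction n with
        | zero =>
          have hid : LinearMap.ker (iterComul k C Δb 0) = ⊥ := by
            rw [LinearMap.ker_eq_bot']; intro m hm; exact hm
          rw [hid]
          simpa using h0
        | succ n ih =>
          rw [eq_bot_iff]
          rintro x ⟨hxS, hxF⟩
          have hcS : Coalgebra.comul (R := k) x ∈ Submodule.map₂ (TensorProduct.mk k C C) S S :=
            hsub (Submodule.mem_map_of_mem hxS)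
          have hc2 := hFstep n x hxF
          have h0' := LinearMap.mem_ker.mp (hkill A (A ⊔ LinearMap.ker (iterComul k C Δb n)) hc2)
          have h5 := aux_mem_TT A.mkQ (A ⊔ LinearMap.ker (iterComul k C Δb n)).mkQ S S hcS h0'
          rw [Submodule.ker_mkQ, Submodule.ker_mkQ, h0, ih, Submodule.map₂_bot_left,
            Submodule.map₂_bot_right, sup_bot_eq] at h5
          have hc0 : Coalgebra.comul (R := k) x = 0 := Submodule.mem_bot _ |>.mp h5
          have hx0 : x = 0 := by
            have hcu := Coalgebra.rTensor_counit_comul (R := k) x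
            rw [hc0, map_zero] at hcu
            have := congrArg (TensorProduct.lid k C) hcu
            simpa using this.symm
          simp [hx0]
      obtain ⟨x, hxS, hxne⟩ := Submodule.ne_bot_iff S |>.mp hSne
      obtain ⟨n, hn⟩ := hexh x
      have : x ∈ (⊥ : Submodule k C) := hFn n ▸ Submodule.mem_inf.mpr ⟨hxS, hn⟩
      exact hxne (Submodule.mem_bot _ |>.mp this)
    · rw [← hS']
      exact inf_le_right
  refine ⟨sSup_le fun S hS => hcos_le S hS, ?_⟩
  intro S hS
  have hle := hcos_le S hS
  obtain ⟨hsub, hSne, hmin⟩ := hS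
  obtain ⟨x, hxS, hxne⟩ := Submodule.ne_bot_iff S |>.mp hSne
  obtain ⟨c, hcsupp, hcsum⟩ := Submodule.mem_span_set.mp (hle hxS)
  have hcne : c ≠ 0 := by
    rintro rfl
    simp only [Finsupp.sum_zero_index] at hcsum
    exact hxne hcsum.symm
  obtain ⟨g₀, hg₀⟩ := Finsupp.support_nonempty_iff.mpr hcne
  have hg₀G : g₀ ∈ G := hcsupp hg₀
  -- a functional separating g₀ from the rest of G
  have hnotmem : g₀ ∉ Submodule.span k (G \ {g₀}) := by
    have h1 := hGli.notMem_span_image (s := {(⟨g₀, hg₀G⟩ : G)}ᶜ)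
      (x := (⟨g₀, hg₀G⟩ : G)) (by simp)
    intro hmem
    refine h1 (Submodule.span_mono ?_ hmem)
    rintro y ⟨hyG, hyne⟩
    exact ⟨⟨y, hyG⟩, by simpa [Subtype.ext_iff] using hyne, rfl⟩
  obtain ⟨φ, hφann, hφne⟩ : ∃ φ : Module.Dual k C,
      (∀ w ∈ Submodule.span k (G \ {g₀}), φ w = 0) ∧ φ g₀ ≠ 0 := by
    by_contra hcon
    push_neg at hcon
    refine hnotmem ((Subspace.forall_mem_dualAnnihilator_apply_eq_zero_iff
      (Submodule.span k (G \ {g₀})) g₀).mp ?_)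
    intro φ hφ
    exact hcon φ ((Submodule.mem_dualAnnihilator φ).mp hφ)
  set f : C →ₗ[k] k := (φ g₀)⁻¹ • φ with hf
  have hf0 : f g₀ = 1 := by
    rw [hf]
    simp [inv_mul_cancel₀ hφne]
  have hfz : ∀ g ∈ G, g ≠ g₀ → f g = 0 := by
    intro g hg hne
    rw [hf]
    simp [hφann g (Submodule.subset_span ⟨hg, by simp [hne]⟩)]
  set Φ : C ⊗[k] C →ₗ[k] C := (TensorProduct.lid k C).toLinearMap ∘ₗ (f.rTensor C) with hΦdef
  have hΦ : ∀ a b : C, Φ (a ⊗ₜ[k] b) = f a • b := by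
    intro a b
    rw [hΦdef]
    simp
  have hmem : Φ (Coalgebra.comul (R := k) x) ∈ S := by
    have hcx : Coalgebra.comul (R := k) x ∈ Submodule.map₂ (TensorProduct.mk k C C) S S :=
      hsub (Submodule.mem_map_of_mem hxS)
    rw [aux_TT_eq_range] at hcx
    obtain ⟨s, hs⟩ := hcx
    rw [← hs]
    clear hs
    induction s using TensorProduct.induction_on with
    | zero => simpa using Submodule.zero_mem S
    | tmul a b =>
      rw [TensorProduct.map_tmul, hΦ]
      exact Submodule.smul_mem _ _ b.2
    | add u v hu hv =>
      rw [map_add, map_add]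
      exact Submodule.add_mem _ hu hv
  have hcomulx : Coalgebra.comul (R := k) x = c.sum fun g r => r • (g ⊗ₜ[k] g) := by
    rw [← hcsum, map_finsuppSum]
    refine Finsupp.sum_congr fun g hg => ?_
    rw [map_smul, (hG g (hcsupp hg)).1]
  have hΦx : Φ (Coalgebra.comul (R := k) x) = c g₀ • g₀ := by
    rw [hcomulx, map_finsuppSum, Finsupp.sum]
    rw [Finset.sum_eq_single g₀]
    · rw [map_smul, hΦ, hf0, one_smul]
    · intro g hg hne
      rw [map_smul, hΦ, hfz g (hcsupp hg) hne, zero_smul, smul_zero]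
    · intro h
      exact absurd hg₀ h
  have hg₀S : g₀ ∈ S := by
    rw [hΦx] at hmem
    have h6 := S.smul_mem (c g₀)⁻¹ hmem
    rwa [smul_smul, inv_mul_cancel₀ (Finsupp.mem_support_iff.mp hg₀), one_smul] at h6
  have hg₀ne : g₀ ≠ 0 := by
    intro h
    have h7 := (hG g₀ hg₀G).2
    rw [h, map_zero] at h7
    exact zero_ne_one h7
  have hTsub : IsSubcoalgebra k C (Submodule.span k {g₀}) := by
    intro t ht
    obtain ⟨y, hy, rfl⟩ := Submodule.mem_map.mp ht
    obtain ⟨r, rfl⟩ := Submodule.mem_span_singleton.mp hy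
    rw [map_smul, (hG g₀ hg₀G).1]
    exact Submodule.smul_mem _ r (Submodule.apply_mem_map₂ _
      (Submodule.mem_span_singleton_self g₀) (Submodule.mem_span_singleton_self g₀))
  rcases hmin _ hTsub (Submodule.span_le.mpr (by simpa using hg₀S)) with hbot | heq
  · exact absurd (Submodule.span_singleton_eq_bot.mp hbot) hg₀ne
  · rw [← heq]
    exact finrank_span_singleton hg₀ne
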